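/- Let θ : ℝ → ℝ ∪ {−∞} be non-increasing and concave on ℝ, and suppose that for some w ∈ ℝ and some α ∈ (0, π/2), θ is affine with slope −tan(α) on the interval (−∞, −w]. Let L = {(x,y) ∈ ℝ² : x ≤ θ(y)}. Then for every ε > 0, L + ε·B₂² ⊆ L + (ε/sin(α))·e₂. -/

import Mathlib

open MeasureTheory Set
open scoped Pointwise RealInnerProductSpace ENNReal Classical

/-- The standard Gaussian measure on `ℝ^d`, with density `(2π)^(-d/2) exp(-‖x‖²/2)`
with respect to Lebesgue measure. -/
noncomputable def gaussD (d : ℕ) : Measure (EuclideanSpace ℝ (Fin d)) :=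
  volume.withDensity fun x =>
    ENNReal.ofReal ((2 * Real.pi) ^ (-(d : ℝ) / 2) * Real.exp (-‖x‖ ^ 2 / 2))

/-- The standard Gaussian measure on `ℝ`. -/
noncomputable def gauss1 : Measure ℝ :=
  volume.withDensity fun t =>
    ENNReal.ofReal ((2 * Real.pi) ^ (-(1 : ℝ) / 2) * Real.exp (-t ^ 2 / 2))

/-- The slice `(K - y) ∩ ℝu`, viewed as a subset of `ℝ` via the isometry
`t ↦ t • (u / ‖u‖)`. -/
def lineSlice {n : ℕ} (K : Set (EuclideanSpace ℝ (Fin n)))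
    (u y : EuclideanSpace ℝ (Fin n)) : Set ℝ :=
  {t : ℝ | y + t • (‖u‖⁻¹ • u) ∈ K}

/-- `Z_B(K, u)`: the set of `y ∈ u^⊥` such that `(K - y) ∩ ℝu` has Euclidean length
at least `2‖u‖`. -/
noncomputable def ZB {n : ℕ} (K : Set (EuclideanSpace ℝ (Fin n)))
    (u : EuclideanSpace ℝ (Fin n)) : Set (EuclideanSpace ℝ (Fin n)) :=
  {y | ⟪y, u⟫ = 0 ∧ ENNReal.ofReal (2 * ‖u‖) ≤ volume (lineSlice K u y)}

/-- Banaszczyk's transform `K * u = (K + [-u, u]) ∩ (Z_B + ℝu)`, with `K * 0 = K`. -/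
noncomputable def bTransform {n : ℕ} (K : Set (EuclideanSpace ℝ (Fin n)))
    (u : EuclideanSpace ℝ (Fin n)) : Set (EuclideanSpace ℝ (Fin n)) :=
  if u = 0 then K
  else (K + segment ℝ (-u) u) ∩ (ZB K u + Set.range fun t : ℝ => t • u)

/-- `Z_K(u)`: the set of `y ∈ u^⊥` such that `γ₁((K - y) ∩ ℝu) ≥ γ₁([-‖u‖, ‖u‖])`. -/
noncomputable def ZG {n : ℕ} (K : Set (EuclideanSpace ℝ (Fin n)))
    (u : EuclideanSpace ℝ (Fin n)) : Set (EuclideanSpace ℝ (Fin n)) :=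
  {y | ⟪y, u⟫ = 0 ∧ gauss1 (Set.Icc (-‖u‖) ‖u‖) ≤ gauss1 (lineSlice K u y)}

/-- The Gaussian Banaszczyk transform `K ∘ u = (K + [-u, u]) ∩ (Z_K(u) + ℝu)`,
with `K ∘ 0 = K`. -/
noncomputable def gTransform {n : ℕ} (K : Set (EuclideanSpace ℝ (Fin n)))
    (u : EuclideanSpace ℝ (Fin n)) : Set (EuclideanSpace ℝ (Fin n)) :=
  if u = 0 then K
  else (K + segment ℝ (-u) u) ∩ (ZG K u + Set.range fun t : ℝ => t • u)

/-- **Claim (Appendix).** Let `θ : ℝ → ℝ ∪ {-∞}` be non-increasing and concave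
(concavity encoded by the convexity of `L = {(x, y) : x ≤ θ(y)}`), affine with slope
`-tan α` on `(-∞, -w]` for some `α ∈ (0, π/2)`. Then for every `ε > 0`,
`L + ε B₂² ⊆ L + (ε / sin α) e₂`. -/
theorem add_ball_subset_translate (θ : ℝ → EReal) (hmono : Antitone θ)
    (hne : ∀ y, θ y ≠ ⊤) (w α : ℝ) (hα : α ∈ Set.Ioo 0 (Real.pi / 2))
    (haff : ∃ b : ℝ, ∀ y ≤ -w, θ y = ((-Real.tan α * y + b : ℝ) : EReal))
    (L : Set (EuclideanSpace ℝ (Fin 2)))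
    (hLdef : L = {p | ((p 0 : ℝ) : EReal) ≤ θ (p 1)}) (hconc : Convex ℝ L) :
    ∀ ε : ℝ, 0 < ε →
      L + ε • Metric.closedBall (0 : EuclideanSpace ℝ (Fin 2)) 1 ⊆
        (fun x => x + (ε / Real.sin α) • EuclideanSpace.single (1 : Fin 2) 1) '' L := by
  obtain ⟨b, hb⟩ := haff
  obtain ⟨hα0, hα2⟩ := hα
  have hpi := Real.pi_pos
  have hcos : 0 < Real.cos α := Real.cos_pos_of_mem_Ioo ⟨by linarith, hα2⟩
  have hsin : 0 < Real.sin α := Real.sin_pos_of_pos_of_lt_pi hα0 (by linarith)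
  have hsin1 : Real.sin α < 1 := by
    nlinarith [Real.sin_sq_add_cos_sq α]
  set T := Real.tan α with hTdef
  have hTsc : T = Real.sin α / Real.cos α := Real.tan_eq_sin_div_cos α
  have hAz : ∀ z : ℝ, z ≤ -w → (!₂[-T * z + b, z] : EuclideanSpace ℝ (Fin 2)) ∈ L := by
    intro z hz
    rw [hLdef]
    show ((-T * z + b : ℝ) : EReal) ≤ θ z
    rw [hb z hz]
  -- θ lies below its left affine extension
  have upper : ∀ y : ℝ, θ y ≤ ((-T * y + b : ℝ) : EReal) := by
    intro y
    rcases le_or_gt y (-w) with hy | hy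
    · rw [hb y hy]
    by_contra hcon
    push_neg at hcon
    have hbot : θ y ≠ ⊥ := by
      intro h; rw [h] at hcon; exact absurd hcon (by simp)
    set r := (θ y).toReal with hrdef
    have hr : ((r : ℝ) : EReal) = θ y := EReal.coe_toReal (hne y) hbot
    have hry : -T * y + b < r := by
      rw [← hr] at hcon; exact_mod_cast hcon
    have hP : (!₂[r, y] : EuclideanSpace ℝ (Fin 2)) ∈ L := by
      rw [hLdef]; show ((r : ℝ) : EReal) ≤ θ y; rw [hr]
    set lam := (y + w + 1) / (y + w + 2) with hlam
    have hyw : 0 < y + w := by linarith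
    have hl0 : 0 ≤ lam := by positivity
    have hl1 : lam < 1 := by
      rw [hlam, div_lt_one (by linarith)]; linarith
    have hmem := hconc (hAz (-w - 2) (by linarith)) hP hl0
      (by linarith : (0:ℝ) ≤ 1 - lam) (by ring : lam + (1 - lam) = 1)
    rw [hLdef] at hmem
    have key : ((lam * (-T * (-w - 2) + b) + (1 - lam) * r : ℝ) : EReal)
        ≤ θ (lam * (-w - 2) + (1 - lam) * y) := hmem
    have hlameq : lam * (y + w + 2) = y + w + 1 := by
      rw [hlam]; exact div_mul_cancel₀ _ (ne_of_gt (by linarith))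
    have hyeq : lam * (-w - 2) + (1 - lam) * y = -w - 1 := by linear_combination -hlameq
    rw [hyeq, hb (-w - 1) (by linarith)] at key
    have key' : lam * (-T * (-w - 2) + b) + (1 - lam) * r ≤ -T * (-w - 1) + b := by
      exact_mod_cast key
    have hTyy : -T * (-w - 1) + b = lam * (-T * (-w - 2) + b) + (1 - lam) * (-T * y + b) := by
      linear_combination (-T) * hlameq
    rw [hTyy] at key'
    nlinarith [mul_lt_mul_of_pos_left hry (by linarith : (0:ℝ) < 1 - lam)]
  -- chord inequality
  have chord : ∀ p0 y y' : ℝ, y' < y → ((p0 : ℝ) : EReal) ≤ θ y →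
      ((p0 + T * (y - y') : ℝ) : EReal) ≤ θ y' := by
    intro p0 y y' hlt hp0
    have hub : p0 ≤ -T * y + b := by
      have h := le_trans hp0 (upper y); exact_mod_cast h
    set z := min (-w) y' - 1 with hz
    have hzw : z ≤ -w := by
      have := min_le_left (-w) y'; rw [hz]; linarith
    have hzy' : z < y' := by
      have := min_le_right (-w) y'; rw [hz]; linarith
    set lam := (y - y') / (y - z) with hlam
    have hyz : 0 < y - z := by linarith
    have hl0 : 0 ≤ lam := by
      rw [hlam]; apply div_nonneg <;> linarith
    have hl1 : lam ≤ 1 := by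
      rw [hlam, div_le_one hyz]; linarith
    have hP : (!₂[p0, y] : EuclideanSpace ℝ (Fin 2)) ∈ L := by
      rw [hLdef]; exact hp0
    have hmem := hconc (hAz z hzw) hP hl0
      (by linarith : (0:ℝ) ≤ 1 - lam) (by ring : lam + (1 - lam) = 1)
    rw [hLdef] at hmem
    have key : ((lam * (-T * z + b) + (1 - lam) * p0 : ℝ) : EReal)
        ≤ θ (lam * z + (1 - lam) * y) := hmem
    have hlameq : lam * (y - z) = y - y' := by
      rw [hlam]; exact div_mul_cancel₀ _ (ne_of_gt hyz)
    have hyeq : lam * z + (1 - lam) * y = y' := by linear_combination -hlameq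
    rw [hyeq] at key
    refine le_trans ?_ key
    have : p0 + T * (y - y') ≤ lam * (-T * z + b) + (1 - lam) * p0 := by
      have hTyy : T * (y - y') = T * (lam * (y - z)) := by rw [hlameq]
      nlinarith [mul_le_mul_of_nonneg_left hub hl0]
    exact_mod_cast this
  -- main argument
  intro ε hε q hq
  rw [Set.mem_add] at hq
  obtain ⟨p, hp, c, hc, rfl⟩ := hq
  rw [Set.mem_smul_set] at hc
  obtain ⟨v, hv, rfl⟩ := hc
  rw [Metric.mem_closedBall, dist_zero_right] at hv
  have hv2 : v 0 ^ 2 + v 1 ^ 2 ≤ 1 := by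
    have hne : ‖v‖ = Real.sqrt (v 0 ^ 2 + v 1 ^ 2) := by
      rw [EuclideanSpace.norm_eq]
      simp [Fin.sum_univ_two, sq_abs]
    rw [hne] at hv
    nlinarith [Real.sq_sqrt (by positivity : (0:ℝ) ≤ v 0 ^ 2 + v 1 ^ 2),
      Real.sqrt_nonneg (v 0 ^ 2 + v 1 ^ 2)]
  have hv1le : v 1 ≤ 1 := by nlinarith
  have hcs : Real.cos α * v 0 + Real.sin α * v 1 ≤ 1 := by
    nlinarith [sq_nonneg (Real.cos α - v 0), sq_nonneg (Real.sin α - v 1),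
      Real.sin_sq_add_cos_sq α]
  set s := ε / Real.sin α with hs
  have hse : s * Real.sin α = ε := by
    rw [hs]; field_simp
  have hsε : ε < s := by
    rw [hs, lt_div_iff₀ hsin]; nlinarith
  set y' := p 1 + ε * v 1 - s with hy'
  have hylt : y' < p 1 := by
    rw [hy']; nlinarith
  have hp0 : ((p 0 : ℝ) : EReal) ≤ θ (p 1) := by
    rw [hLdef] at hp; exact hp
  have hchord := chord (p 0) (p 1) y' hylt hp0
  have hkey : ε * v 0 ≤ T * (p 1 - y') := by
    have h1 : p 1 - y' = s - ε * v 1 := by rw [hy']; ring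
    rw [h1, hTsc, div_mul_eq_mul_div, le_div_iff₀ hcos]
    nlinarith [mul_le_mul_of_nonneg_left hcs hε.le]
  refine ⟨p + ε • v - s • EuclideanSpace.single (1 : Fin 2) 1, ?_, by simp [hs]⟩
  rw [hLdef]
  simp only [Set.mem_setOf_eq]
  have e0 : ((p + ε • v - s • EuclideanSpace.single (1 : Fin 2) 1 :
      EuclideanSpace ℝ (Fin 2))) 0 = p 0 + ε * v 0 := by
    simp [EuclideanSpace.single_apply]
  have e1 : ((p + ε • v - s • EuclideanSpace.single (1 : Fin 2) 1 :
      EuclideanSpace ℝ (Fin 2))) 1 = y' := by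
    rw [hy']; simp [EuclideanSpace.single_apply]
  rw [e0, e1]
  refine le_trans ?_ hchord
  have : p 0 + ε * v 0 ≤ p 0 + T * (p 1 - y') := by linarith
  exact_mod_cast this
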